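/- Let A ∈ ℤ^{m×n} have rank m, let B ⊆ A be an invertible m×m submatrix, let Γ = B·ℤ^m, and let γ be the gcd of the absolute values of the m×m minors of A. If z ∈ ℤ^n_{≥0} is such that no w ∈ ℤ^n with 0 ≤ w ⪇ z satisfies A w ≡ A z (mod Γ), then ‖z‖₁ < γ⁻¹·|det(B)|. -/

import Mathlib

open Matrix Finset

private lemma det_mul_rect {m n : ℕ} (A : Matrix (Fin m) (Fin n) ℤ) (C : Matrix (Fin n) (Fin m) ℤ) :
    (A * C).det = ∑ p : Fin m → Fin n, (∏ i, C (p i) i) * (A.submatrix id p).det := by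
  have h1 : (A * C).det
      = ∑ σ : Equiv.Perm (Fin m), ((Equiv.Perm.sign σ : ℤˣ) : ℤ) * ∏ i, ∑ j, A (σ i) j * C j i := by
    simp only [Matrix.det_apply', Matrix.mul_apply]
    norm_cast
  rw [h1]
  simp only [Finset.prod_univ_sum, Fintype.piFinset_univ, Finset.mul_sum]
  rw [Finset.sum_comm]
  refine Finset.sum_congr rfl fun p _ => ?_
  simp only [Matrix.det_apply', Finset.mul_sum, Matrix.submatrix_apply, id_eq]
  refine Finset.sum_congr rfl fun σ _ => ?_
  rw [Finset.prod_mul_distrib]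
  push_cast
  ring

private lemma card_quotient_eq_natAbs_det {m : ℕ} (N : Submodule ℤ (Fin m → ℤ))
    (b : Module.Basis (Fin m) ℤ N) :
    Nat.card ((Fin m → ℤ) ⧸ N)
      = (Matrix.det (Matrix.of fun i j => (b j : Fin m → ℤ) i)).natAbs := by
  classical
  obtain ⟨n', snf⟩ := N.smithNormalForm (Pi.basisFun ℤ (Fin m))
  have hn : n' = m := by
    have e := snf.bN.indexEquiv b
    simpa using Fintype.card_congr e
  subst hn
  -- LHS : index computation
  have hL : Nat.card ((Fin n' → ℤ) ⧸ N) = ∏ i, (snf.a i).natAbs := by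
    have h := snf.toAddSubgroup_index_eq_pow_mul_prod
    simp only [Fintype.card_fin, Nat.sub_self, pow_zero, one_mul,
      Ideal.span_singleton_toAddSubgroup_eq_zmultiples, Int.index_zmultiples] at h
    exact h
  rw [hL]
  -- RHS
  have hfb : Function.Bijective ⇑snf.f :=
    (Finite.injective_iff_bijective).mp snf.f.injective
  let σ : Equiv.Perm (Fin n') := Equiv.ofBijective _ hfb
  let P : Matrix (Fin n') (Fin n') ℤ := Matrix.of fun i j => (snf.bM j) i
  have hP : P = (Pi.basisFun ℤ (Fin n')).toMatrix ⇑snf.bM := by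
    ext i j
    simp [P, Module.Basis.toMatrix_apply]
  have hPabs : P.det.natAbs = 1 := by
    have h2 : ((Pi.basisFun ℤ (Fin n')).toMatrix ⇑snf.bM)
        * (snf.bM.toMatrix ⇑(Pi.basisFun ℤ (Fin n'))) = 1 :=
      Module.Basis.toMatrix_mul_toMatrix_flip _ _
    have h3 := congrArg Matrix.det h2
    rw [Matrix.det_mul, Matrix.det_one] at h3
    have h4 : IsUnit P.det := by rw [hP]; exact IsUnit.of_mul_eq_one _ h3
    rcases Int.isUnit_iff.mp h4 with h | h <;> simp [h]
  have hTb : (Matrix.of fun i j => (b j : Fin n' → ℤ) i)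
      = (P.submatrix id ⇑snf.f * Matrix.diagonal snf.a) * (snf.bN.toMatrix ⇑b) := by
    ext i j
    rw [Matrix.mul_apply]
    have hb := snf.bN.sum_repr (b j)
    have hb' : (b j : Fin n' → ℤ) i = ∑ k, snf.bN.repr (b j) k * ((snf.bN k : Fin n' → ℤ) i) := by
      conv_lhs => rw [← hb]
      push_cast
      simp [Finset.sum_apply]
    simp only [Matrix.of_apply, hb', Matrix.mul_diagonal, Module.Basis.toMatrix_apply,
      Matrix.submatrix_apply, id_eq]
    refine Finset.sum_congr rfl fun k _ => ?_
    rw [snf.snf k]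
    simp only [Pi.smul_apply, smul_eq_mul, P, Matrix.of_apply]
    ring
  rw [hTb]
  have hMabs : ((snf.bN.toMatrix ⇑b)).det.natAbs = 1 := by
    have h2 : (snf.bN.toMatrix ⇑b) * (b.toMatrix ⇑snf.bN) = 1 :=
      Module.Basis.toMatrix_mul_toMatrix_flip _ _
    have h3 := congrArg Matrix.det h2
    rw [Matrix.det_mul, Matrix.det_one] at h3
    rcases Int.isUnit_iff.mp (IsUnit.of_mul_eq_one _ h3) with h | h <;> simp [h]
  have hfσ : ⇑snf.f = ⇑σ := rfl
  rw [Matrix.det_mul, Matrix.det_mul, hfσ, Matrix.det_permute' σ P, Matrix.det_diagonal]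
  simp only [Int.natAbs_mul, hMabs, hPabs, mul_one]
  have hprod : (∏ i, snf.a i).natAbs = ∏ i, (snf.a i).natAbs :=
    map_prod Int.natAbsHom snf.a Finset.univ
  rcases Int.units_eq_one_or (Equiv.Perm.sign σ) with h | h <;> simp [h, hprod]

private lemma min_sub_min_nonneg {a b k : ℤ} (hab : a ≤ b) : 0 ≤ min b k - min a k :=
  sub_nonneg.mpr (min_le_min hab (le_refl k))

private lemma min_sub_min_le {a c k : ℤ} (hc : 0 ≤ c) : min (a + c) k - min a k ≤ c := by
  rcases le_total a k with h | h
  · rw [min_eq_left h]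
    have := min_le_left (a + c) k
    linarith
  · rw [min_eq_right h, min_eq_right (by linarith : k ≤ a + c)]
    linarith

private lemma min_sub_min_mono {a b k l : ℤ} (hab : a ≤ b) (hkl : k ≤ l) :
    min b k - min a k ≤ min b l - min a l := by
  rcases le_total b k with h | h
  · rw [min_eq_left h, min_eq_left (h.trans hkl), min_eq_left (hab.trans h),
      min_eq_left (hab.trans (h.trans hkl))]
  · rcases le_total a k with h2 | h2
    · rw [min_eq_right h, min_eq_left h2, min_eq_left (h2.trans hkl)]
      have : k ≤ min b l := le_min h hkl
      linarith
    · rw [min_eq_right (h2.trans hab), min_eq_right h2]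
      have := min_le_min hab (le_refl l)
      linarith

private lemma chain_exists {n : ℕ} (z : Fin n → ℤ) (hz : 0 ≤ z) :
    ∃ y : ℕ → (Fin n → ℤ), (∀ k, 0 ≤ y k) ∧ (∀ k, y k ≤ z) ∧
      (∀ k l : ℕ, k ≤ l → y k ≤ y l) ∧
      (∀ k : ℕ, (k : ℤ) ≤ ∑ i, z i → ∑ i, y k i = k) := by
  classical
  set z' : ℕ → ℤ := fun j => if h : j < n then z ⟨j, h⟩ else 0 with hz'
  have hz'0 : ∀ j, 0 ≤ z' j := by
    intro j
    simp only [hz']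
    split
    · exact hz _
    · exact le_refl 0
  set s : ℕ → ℤ := fun i => ∑ j ∈ Finset.range i, z' j with hs
  have hstep : ∀ i, s (i + 1) = s i + z' i := by
    intro i; simp [hs, Finset.sum_range_succ]
  have hsmono : ∀ i, s i ≤ s (i + 1) := by
    intro i; rw [hstep]; linarith [hz'0 i]
  have hz'eq : ∀ i : Fin n, z' (i : ℕ) = z i := by
    intro i; simp [hz', i.isLt]
  have hsum : ∀ k : ℕ, ∑ i : Fin n, (min (s ((i : ℕ) + 1)) (k : ℤ) - min (s (i : ℕ)) (k : ℤ))
      = min (s n) (k : ℤ) := by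
    intro k
    rw [Fin.sum_univ_eq_sum_range (fun j => min (s (j + 1)) (k : ℤ) - min (s j) (k : ℤ)) n]
    rw [Finset.sum_range_sub (fun j => min (s j) (k : ℤ)) n]
    have h0 : s 0 = 0 := by simp [hs]
    rw [h0]
    have : min (0 : ℤ) (k : ℤ) = 0 := by
      rw [min_eq_left]; exact_mod_cast Nat.zero_le k
    rw [this, sub_zero]
  have hsn : s n = ∑ i, z i := by
    show ∑ j ∈ Finset.range n, z' j = ∑ i, z i
    rw [← Fin.sum_univ_eq_sum_range (fun j => z' j) n]
    exact Finset.sum_congr rfl fun i _ => hz'eq i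
  refine ⟨fun k i => min (s ((i : ℕ) + 1)) (k : ℤ) - min (s (i : ℕ)) (k : ℤ), ?_, ?_, ?_, ?_⟩
  · intro k i
    exact min_sub_min_nonneg (hsmono (i : ℕ))
  · intro k i
    have h1 := hstep (i : ℕ)
    have h2 := hz'eq i
    have h4 : min (s ((i : ℕ) + 1)) (k : ℤ) - min (s (i : ℕ)) (k : ℤ) ≤ z' (i : ℕ) := by
      rw [h1]
      exact min_sub_min_le (hz'0 (i : ℕ))
    calc min (s ((i : ℕ) + 1)) (k : ℤ) - min (s (i : ℕ)) (k : ℤ) ≤ z' (i : ℕ) := h4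
    _ = z i := h2
  · intro k l hkl i
    have h2 : (k : ℤ) ≤ (l : ℤ) := by exact_mod_cast hkl
    exact min_sub_min_mono (hsmono (i : ℕ)) h2
  · intro k hk
    rw [hsum k, hsn, min_eq_right hk]

/-- If `z ∈ ℤⁿ_{≥0}` is such that no `w` with `0 ≤ w ⪇ z` satisfies
`A w ≡ A z (mod Γ)` where `Γ = B·ℤᵐ` for an invertible `m × m` submatrix
`B = A_g` of `A`, then `‖z‖₁ < γ⁻¹·|det B|`, i.e. `γ·‖z‖₁ < |det B|`,
where `γ` is the gcd of the absolute values of the `m × m` minors of `A`. -/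
theorem stmt4 (m n : ℕ) (A : Matrix (Fin m) (Fin n) ℤ) (hA : A.rank = m)
    (g : Fin m → Fin n) (hg : Function.Injective g)
    (hB : (A.submatrix id g).det ≠ 0)
    (z : Fin n → ℤ) (hz : 0 ≤ z)
    (hmin : ∀ w : Fin n → ℤ, 0 ≤ w → w ≤ z → w ≠ z →
      A.mulVec w - A.mulVec z ∉ LinearMap.range (A.submatrix id g).mulVecLin) :
    (∑ i, z i) *
        (Finset.univ.gcd (fun g' : Fin m → Fin n =>
          (A.submatrix id g').det.natAbs) : ℤ) <
      ((A.submatrix id g).det.natAbs : ℤ) := by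
  classical
  set B := A.submatrix id g with hBdef
  set γi : ℤ := Finset.univ.gcd (fun g' : Fin m → Fin n =>
    ((A.submatrix id g').det.natAbs : ℤ)) with hγ
  set γn : ℕ := γi.natAbs with hγn
  have hγcast : (γn : ℤ) = γi := by
    rw [hγn, ← Int.abs_eq_natAbs, Int.abs_eq_normalize, Finset.normalize_gcd]
  set Γ : Submodule ℤ (Fin m → ℤ) := LinearMap.range B.mulVecLin with hΓdef
  set Λ : Submodule ℤ (Fin m → ℤ) := LinearMap.range A.mulVecLin with hΛdef
  -- Γ ≤ Λ
  have hΓΛ : Γ ≤ Λ := by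
    rintro x ⟨v, rfl⟩
    refine ⟨fun j => ∑ i, if j = g i then v i else 0, ?_⟩
    simp only [Matrix.mulVecLin_apply]
    ext k
    simp only [Matrix.mulVec, dotProduct, hBdef, Matrix.submatrix_apply, id_eq]
    simp_rw [Finset.mul_sum, mul_ite, mul_zero]
    rw [Finset.sum_comm]
    refine Finset.sum_congr rfl fun i _ => ?_
    rw [Finset.sum_ite_eq' Finset.univ (g i) (fun x => A k x * v i)]
    simp
  -- injectivity of B.mulVecLin
  have hBinj : Function.Injective B.mulVecLin := by
    rw [← LinearMap.ker_eq_bot, LinearMap.ker_eq_bot']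
    intro v hv
    simp only [Matrix.mulVecLin_apply] at hv
    have h1 : B.adjugate.mulVec (B.mulVec v) = 0 := by rw [hv, Matrix.mulVec_zero]
    rw [Matrix.mulVec_mulVec, Matrix.adjugate_mul, Matrix.smul_mulVec,
      Matrix.one_mulVec] at h1
    exact (smul_eq_zero.mp h1).resolve_left hB
  -- card of quotient by Γ
  let eΓ : (Fin m → ℤ) ≃ₗ[ℤ] Γ := LinearEquiv.ofInjective B.mulVecLin hBinj
  let bΓ : Module.Basis (Fin m) ℤ Γ := (Pi.basisFun ℤ (Fin m)).map eΓ
  have hcardΓ : Nat.card ((Fin m → ℤ) ⧸ Γ) = B.det.natAbs := by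
    rw [card_quotient_eq_natAbs_det Γ bΓ]
    congr 2
    ext i j
    show ((bΓ j : Fin m → ℤ)) i = B i j
    have h1 : ((bΓ j : Fin m → ℤ)) = B.mulVec (Pi.single j 1) := by
      simp only [bΓ, Module.Basis.map_apply, eΓ, Pi.basisFun_apply]
      rw [LinearEquiv.ofInjective_apply]
      simp [Matrix.mulVecLin_apply]
    rw [h1, Matrix.mulVec_single]
    simp
  -- γ divides card of quotient by Λ
  have hγI : γn ∣ Nat.card ((Fin m → ℤ) ⧸ Λ) := by
    obtain ⟨r, bΛ0⟩ := Submodule.basisOfPid (Pi.basisFun ℤ (Fin m)) Λ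
    have hr : r = m := by
      have h1 := Module.finrank_eq_card_basis bΛ0
      have h2 : Module.finrank ℤ ↥Λ = m := hA
      simp only [Fintype.card_fin] at h1
      omega
    let bΛ : Module.Basis (Fin m) ℤ ↥Λ := bΛ0.reindex (finCongr hr)
    rw [card_quotient_eq_natAbs_det Λ bΛ]
    have hmem : ∀ j, ((bΛ j : Fin m → ℤ)) ∈ Λ := fun j => (bΛ j).2
    simp only [hΛdef, LinearMap.mem_range] at hmem
    choose c hc using hmem
    have hT : (Matrix.of fun i j => (bΛ j : Fin m → ℤ) i)
        = A * (Matrix.of fun k j => c j k) := by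
      ext i j
      simp only [Matrix.of_apply, Matrix.mul_apply]
      rw [← hc j]
      simp [Matrix.mulVecLin_apply, Matrix.mulVec, dotProduct]
    rw [hT]
    have hdvd : (γn : ℤ) ∣ (A * (Matrix.of fun k j => c j k)).det := by
      rw [det_mul_rect]
      refine Finset.dvd_sum fun p _ => Dvd.dvd.mul_left ?_ _
      have h1 : γn ∣ (A.submatrix id p).det.natAbs := by
        have h5 : γi ∣ ((A.submatrix id p).det.natAbs : ℤ) := Finset.gcd_dvd (Finset.mem_univ p)
        rw [← hγcast] at h5
        exact_mod_cast h5
      exact dvd_trans (Int.natCast_dvd_natCast.mpr h1) (Int.natAbs_dvd.mpr dvd_rfl)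
    have := Int.natAbs_dvd_natAbs.mpr hdvd
    simpa using this
  -- chain
  obtain ⟨y, hy0, hyz, hymono, hysum⟩ := chain_exists z hz
  have hzsum0 : (0 : ℤ) ≤ ∑ i, z i := Finset.sum_nonneg fun i _ => hz i
  set S : ℕ := (∑ i, z i).toNat with hS
  have hSz : ((S : ℕ) : ℤ) = ∑ i, z i := Int.toNat_of_nonneg hzsum0
  -- finiteness of quotient
  have hfin : Finite ((Fin m → ℤ) ⧸ Γ) := by
    have hne : Nat.card ((Fin m → ℤ) ⧸ Γ) ≠ 0 := by
      rw [hcardΓ]; simpa using hB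
    exact (Nat.card_ne_zero.mp hne).2
  -- the injection
  have hymem : ∀ k : ℕ, A.mulVec (y k) ∈ Λ := fun k => ⟨y k, rfl⟩
  let ψ : Fin (S + 1) → ↥(Λ.map Γ.mkQ) := fun k =>
    ⟨Γ.mkQ (A.mulVec (y (k : ℕ))), Submodule.mem_map_of_mem (hymem (k : ℕ))⟩
  have hψinj : Function.Injective ψ := by
    have key : ∀ k l : Fin (S + 1), (k : ℕ) < (l : ℕ) → ψ k ≠ ψ l := by
      intro k l hkl heq
      have hqeq : Γ.mkQ (A.mulVec (y (k : ℕ))) = Γ.mkQ (A.mulVec (y (l : ℕ))) := by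
        simpa [ψ, Subtype.ext_iff] using heq
      have hmem2 : A.mulVec (y (k : ℕ)) - A.mulVec (y (l : ℕ)) ∈ Γ := by
        rw [Submodule.mkQ_apply, Submodule.mkQ_apply] at hqeq
        exact (Submodule.Quotient.eq Γ).mp hqeq
      -- build the contradiction
      set w : Fin n → ℤ := fun i => z i - y (l : ℕ) i + y (k : ℕ) i with hw
      have hksum : ∑ i, y (k : ℕ) i = (k : ℕ) := by
        apply hysum
        rw [← hSz]
        exact_mod_cast le_of_lt (lt_of_lt_of_le hkl (Nat.lt_succ_iff.mp l.isLt))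
      have hlsum : ∑ i, y (l : ℕ) i = (l : ℕ) := by
        apply hysum
        rw [← hSz]
        exact_mod_cast Nat.lt_succ_iff.mp l.isLt
      have hw0 : 0 ≤ w := by
        intro i
        have e1 : y (l : ℕ) i ≤ z i := hyz (l : ℕ) i
        have e2 : 0 ≤ y (k : ℕ) i := hy0 (k : ℕ) i
        simp only [hw, Pi.zero_apply]
        omega
      have hwz : w ≤ z := by
        intro i
        have e3 : y (k : ℕ) i ≤ y (l : ℕ) i := hymono (k : ℕ) (l : ℕ) (le_of_lt hkl) i
        simp only [hw]
        omega
      have hwne : w ≠ z := by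
        intro hcon
        have : ∀ i, y (k : ℕ) i = y (l : ℕ) i := by
          intro i
          have := congrFun hcon i
          simp only [hw] at this
          omega
        have h1 : (∑ i, y (k : ℕ) i) = ∑ i, y (l : ℕ) i :=
          Finset.sum_congr rfl fun i _ => this i
        rw [hksum, hlsum] at h1
        exact absurd (by exact_mod_cast h1) (Nat.ne_of_lt hkl)
      refine hmin w hw0 hwz hwne ?_
      have hsub : w - z = y (k : ℕ) - y (l : ℕ) := by
        ext i
        simp only [hw, Pi.sub_apply]
        ring
      have : A.mulVec w - A.mulVec z = A.mulVec (y (k : ℕ)) - A.mulVec (y (l : ℕ)) := by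
        rw [← A.mulVecLin_apply, ← A.mulVecLin_apply, ← map_sub, hsub, map_sub]
        simp [Matrix.mulVecLin_apply]
      rw [this]
      exact hmem2
    intro k l hkl
    by_contra hne
    rcases Ne.lt_or_gt hne with h | h
    · exact key k l h hkl
    · exact key l k h hkl.symm
  have hle1 : S + 1 ≤ Nat.card ↥(Λ.map Γ.mkQ) := by
    have hfin2 : Finite ↥(Λ.map Γ.mkQ) := Subtype.finite
    have := Nat.card_le_card_of_injective ψ hψinj
    simpa using this
  have hcount := Submodule.card_quotient_mul_card_quotient Λ Γ hΓΛ
  rw [hcardΓ] at hcount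
  -- γn ≤ second factor
  have hIne : Nat.card ((Fin m → ℤ) ⧸ Λ) ≠ 0 := by
    intro h0
    rw [h0, mul_zero] at hcount
    exact hB (Int.natAbs_eq_zero.mp hcount.symm)
  have hγle : γn ≤ Nat.card ((Fin m → ℤ) ⧸ Λ) := Nat.le_of_dvd (Nat.pos_of_ne_zero hIne) hγI
  have hγpos : 0 < γn := by
    rcases Nat.eq_zero_or_pos γn with h | h
    · exfalso
      have hd : γn ∣ B.det.natAbs := by
        have h5 : γi ∣ (B.det.natAbs : ℤ) := Finset.gcd_dvd (Finset.mem_univ g)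
        rw [← hγcast] at h5
        exact_mod_cast h5
      rw [h] at hd
      exact hB (Int.natAbs_eq_zero.mp (Nat.eq_zero_of_zero_dvd hd))
    · exact h
  -- final arithmetic
  have hfinal : S * γn < B.det.natAbs := by
    calc S * γn < S * γn + γn := by omega
    _ = (S + 1) * γn := by ring
    _ ≤ Nat.card ↥(Λ.map Γ.mkQ) * Nat.card ((Fin m → ℤ) ⧸ Λ) :=
        Nat.mul_le_mul hle1 hγle
    _ = B.det.natAbs := hcount
  rw [← hSz, ← hγcast]
  exact_mod_cast hfinal
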